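/- Let d ≥ 1, t ≥ 1, and B > 0, and let π_1, …, π_t : ℝ^d → ℝ be everywhere differentiable functions with π_u(θ) > 0 and ‖∇π_u(θ)‖ ≤ B · π_u(θ) for all θ ∈ ℝ^d and u = 1, …, t (i.e. each score function ∇ log π_u is bounded in norm by B). Then for all θ¹, θ² ∈ ℝ^d there exists λ ∈ [0,1] such that, with θ̃ := λθ¹ + (1 − λ)θ², | ∏_{u=1}^t π_u(θ¹) − ∏_{u=1}^t π_u(θ²) | ≤ ‖θ¹ − θ²‖ · t · B · ∏_{u=1}^t π_u(θ̃). -/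

import Mathlib

open Finset

/-- Mean-value bound on products of positive functions with uniformly
bounded score functions: if each `π_u > 0` is differentiable with `‖∇π_u‖ ≤ B·π_u`, then
for any `θ¹, θ²` there is `λ ∈ [0,1]` with
`|∏ π_u(θ¹) − ∏ π_u(θ²)| ≤ ‖θ¹ − θ²‖ · t · B · ∏ π_u(λθ¹ + (1−λ)θ²)`. -/
theorem product_score_mean_value_bound
    {d : ℕ} (hd : 1 ≤ d) (t : ℕ) (ht : 1 ≤ t) (B : ℝ) (hB : 0 < B)
    (π : Fin t → EuclideanSpace ℝ (Fin d) → ℝ)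
    (hdiff : ∀ u, Differentiable ℝ (π u))
    (hpos : ∀ u θ, 0 < π u θ)
    (hscore : ∀ u θ, ‖gradient (π u) θ‖ ≤ B * π u θ) :
    ∀ θ₁ θ₂ : EuclideanSpace ℝ (Fin d),
      ∃ l ∈ Set.Icc (0 : ℝ) 1,
        |(∏ u, π u θ₁) - ∏ u, π u θ₂| ≤
          ‖θ₁ - θ₂‖ * t * B * ∏ u, π u (l • θ₁ + (1 - l) • θ₂) := by
  intro θ₁ θ₂
  set γ : ℝ → EuclideanSpace ℝ (Fin d) := fun l => l • θ₁ + (1 - l) • θ₂ with hγ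
  have hγderiv : ∀ l : ℝ, HasDerivAt γ (θ₁ - θ₂) l := by
    intro l
    have h1 : HasDerivAt (fun l : ℝ => l • θ₁) θ₁ l := by
      simpa using (hasDerivAt_id l).smul_const θ₁
    have h2 : HasDerivAt (fun l : ℝ => (1 - l) • θ₂) (-θ₂) l := by
      have : HasDerivAt (fun l : ℝ => (1 - l)) (-1) l := by
        simpa using (hasDerivAt_id' l).const_sub (1:ℝ)
      simpa using this.smul_const θ₂
    exact (h1.add h2).congr_deriv (sub_eq_add_neg _ _).symm
  -- derivative of each component
  have hcomp : ∀ (u : Fin t) (l : ℝ),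
      HasDerivAt (fun l => π u (γ l)) (inner ℝ (gradient (π u) (γ l)) (θ₁ - θ₂) : ℝ) l := by
    intro u l
    have hg := ((hdiff u) (γ l)).hasGradientAt
    have := (hg.hasFDerivAt.comp l (hγderiv l).hasFDerivAt).hasDerivAt
    simpa [Function.comp_def] using this
  set g : ℝ → ℝ := fun l => ∏ u, π u (γ l) with hgdef
  have hgderiv : ∀ l : ℝ, HasDerivAt g
      (∑ u, (∏ j ∈ Finset.univ.erase u, π j (γ l)) •
        (inner ℝ (gradient (π u) (γ l)) (θ₁ - θ₂) : ℝ)) l := by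
    intro l
    exact HasDerivAt.fun_finsetProd (fun u _ => hcomp u l)
  obtain ⟨c, hc, hceq⟩ := exists_hasDerivAt_eq_slope g _ (by norm_num : (0:ℝ) < 1)
    (fun l _ => (hgderiv l).continuousAt.continuousWithinAt)
    (fun l _ => (hgderiv l))
  refine ⟨c, ⟨le_of_lt hc.1, le_of_lt hc.2⟩, ?_⟩
  have hg1 : g 1 = ∏ u, π u θ₁ := by simp [hgdef, hγ]
  have hg0 : g 0 = ∏ u, π u θ₂ := by simp [hgdef, hγ]
  have key : |(∏ u, π u θ₁) - ∏ u, π u θ₂| =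
      |∑ u, (∏ j ∈ Finset.univ.erase u, π j (γ c)) •
        (inner ℝ (gradient (π u) (γ c)) (θ₁ - θ₂) : ℝ)| := by
    rw [hceq]; rw [hg1, hg0]; norm_num
  rw [key]
  calc |∑ u, (∏ j ∈ Finset.univ.erase u, π j (γ c)) •
        (inner ℝ (gradient (π u) (γ c)) (θ₁ - θ₂) : ℝ)|
      ≤ ∑ u, |(∏ j ∈ Finset.univ.erase u, π j (γ c)) •
        (inner ℝ (gradient (π u) (γ c)) (θ₁ - θ₂) : ℝ)| := Finset.abs_sum_le_sum_abs _ _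
    _ ≤ ∑ u : Fin t, ‖θ₁ - θ₂‖ * B * ∏ j, π j (γ c) := by
        apply Finset.sum_le_sum
        intro u _
        have hpe : 0 < ∏ j ∈ Finset.univ.erase u, π j (γ c) :=
          Finset.prod_pos (fun j _ => hpos j _)
        rw [smul_eq_mul, abs_mul, abs_of_pos hpe]
        have hin : |(inner ℝ (gradient (π u) (γ c)) (θ₁ - θ₂) : ℝ)| ≤
            (B * π u (γ c)) * ‖θ₁ - θ₂‖ := by
          calc |(inner ℝ (gradient (π u) (γ c)) (θ₁ - θ₂) : ℝ)|
              ≤ ‖gradient (π u) (γ c)‖ * ‖θ₁ - θ₂‖ := abs_real_inner_le_norm _ _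
            _ ≤ (B * π u (γ c)) * ‖θ₁ - θ₂‖ :=
                mul_le_mul_of_nonneg_right (hscore u _) (norm_nonneg _)
        calc (∏ j ∈ Finset.univ.erase u, π j (γ c)) *
              |(inner ℝ (gradient (π u) (γ c)) (θ₁ - θ₂) : ℝ)|
            ≤ (∏ j ∈ Finset.univ.erase u, π j (γ c)) * ((B * π u (γ c)) * ‖θ₁ - θ₂‖) :=
              mul_le_mul_of_nonneg_left hin hpe.le
          _ = ‖θ₁ - θ₂‖ * B * ∏ j, π j (γ c) := by
              rw [← Finset.prod_erase_mul Finset.univ _ (Finset.mem_univ u)]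
              ring
    _ = ‖θ₁ - θ₂‖ * t * B * ∏ u, π u (c • θ₁ + (1 - c) • θ₂) := by
        rw [Finset.sum_const, Finset.card_univ, Fintype.card_fin]
        simp [hγ]; ring
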